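/- Let x be a string of length at most n over a metric space and let α ≥ 1. Let x' be the string obtained from x by reducing every run of length less than α to length one (leaving runs of length at least α unchanged). Then for any string y of length at most n, dtw(x', y) ≤ dtw(x, y) ≤ α · dtw(x', y). -/

import Mathlib

/-- `xb` is an expansion of `x`: each letter of `x` is duplicated in place a positive
number of times. -/
def IsExpansion {α : Type*} (x xb : List α) : Prop :=
  ∃ ks : List ℕ, ks.length = x.length ∧ (∀ k ∈ ks, 0 < k) ∧
    xb = (List.zipWith (fun a k => List.replicate k a) x ks).flatten

/-- `(xb, yb)` is a correspondence between `x` and `y`: a pair of equal-length expansions. -/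
def IsCorrespondence {α : Type*} (x y xb yb : List α) : Prop :=
  IsExpansion x xb ∧ IsExpansion y yb ∧ xb.length = yb.length

/-- The cost of a correspondence: summed distances of aligned letters. -/
noncomputable def corrCost {α : Type*} (δ : α → α → ℝ) (xb yb : List α) : ℝ :=
  (List.zipWith δ xb yb).sum

/-- Dynamic time warping distance with respect to a distance function `δ`. -/
noncomputable def dtw {α : Type*} (δ : α → α → ℝ) (x y : List α) : ℝ :=
  sInf {c | ∃ xb yb, IsCorrespondence x y xb yb ∧ c = corrCost δ xb yb}

/-- Generalized Hamming distance on letters. -/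
noncomputable def hamDist {α : Type*} [DecidableEq α] (a b : α) : ℝ := if a = b then 0 else 1

/-- DTW over generalized Hamming space. -/
noncomputable def dtw0 {α : Type*} [DecidableEq α] (x y : List α) : ℝ := dtw hamDist x y

/-- Reduce every run of length less than α to length one, leaving longer runs unchanged. -/
noncomputable def reduceShortRuns {α : Type*} [DecidableEq α] (a : ℝ) (x : List α) : List α :=
  ((x.splitBy (fun c d => decide (c = d))).map
    (fun r => if (r.length : ℝ) < a then r.take 1 else r)).flatten

namespace DTWAux

open List

variable {α : Type*}

theorem isExpansion_nil : IsExpansion ([] : List α) [] := ⟨[], by simp, by simp, by simp⟩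

theorem isExpansion_nil_iff {xb : List α} : IsExpansion ([] : List α) xb ↔ xb = [] := by
  constructor
  · rintro ⟨ks, hlen, -, rfl⟩
    rw [List.length_nil, List.length_eq_zero_iff] at hlen
    subst hlen; simp
  · rintro rfl; exact isExpansion_nil

theorem isExpansion_cons_iff {u : α} {x xb : List α} :
    IsExpansion (u :: x) xb ↔
      ∃ k xb', 0 < k ∧ IsExpansion x xb' ∧ xb = List.replicate k u ++ xb' := by
  constructor
  · rintro ⟨ks, hlen, hpos, rfl⟩
    cases ks with
    | nil => simp at hlen
    | cons k ks =>
      refine ⟨k, _, hpos k (by simp), ⟨ks, by simpa using hlen,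
        fun j hj => hpos j (by simp [hj]), rfl⟩, by simp⟩
  · rintro ⟨k, xb', hk, ⟨ks, hlen, hpos, rfl⟩, rfl⟩
    refine ⟨k :: ks, by simp [hlen], ?_, by simp⟩
    intro j hj
    rcases List.mem_cons.mp hj with rfl | hj
    · exact hk
    · exact hpos j hj

theorem isExpansion_append {x1 x2 y1 y2 : List α} (h1 : IsExpansion x1 y1)
    (h2 : IsExpansion x2 y2) : IsExpansion (x1 ++ x2) (y1 ++ y2) := by
  induction x1 generalizing y1 with
  | nil => rw [isExpansion_nil_iff] at h1; subst h1; simpa using h2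
  | cons u t ih =>
    rcases isExpansion_cons_iff.mp h1 with ⟨k, y1', hk, h1', rfl⟩
    rw [List.cons_append]
    exact isExpansion_cons_iff.mpr ⟨k, y1' ++ y2, hk, ih h1', by simp⟩

theorem isExpansion_append_split {x1 x2 z : List α} (h : IsExpansion (x1 ++ x2) z) :
    ∃ z1 z2, z = z1 ++ z2 ∧ IsExpansion x1 z1 ∧ IsExpansion x2 z2 := by
  induction x1 generalizing z with
  | nil => exact ⟨[], z, by simp, isExpansion_nil, by simpa using h⟩
  | cons u t ih =>
    rw [List.cons_append, isExpansion_cons_iff] at h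
    rcases h with ⟨k, z', hk, h', rfl⟩
    rcases ih h' with ⟨z1, z2, rfl, hz1, hz2⟩
    exact ⟨List.replicate k u ++ z1, z2, by simp,
      isExpansion_cons_iff.mpr ⟨k, z1, hk, hz1, rfl⟩, hz2⟩

theorem isExpansion_replicate_inv {u : α} {k : ℕ} {z : List α}
    (h : IsExpansion (List.replicate k u) z) :
    k ≤ z.length ∧ z = List.replicate z.length u := by
  induction k generalizing z with
  | zero => rw [List.replicate_zero, isExpansion_nil_iff] at h; subst h; simp
  | succ k ih =>
    rw [List.replicate_succ, isExpansion_cons_iff] at h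
    rcases h with ⟨j, z', hj, h', rfl⟩
    rcases ih h' with ⟨hle, hz'⟩
    constructor
    · simp only [List.length_append, List.length_replicate]; omega
    · conv_lhs => rw [hz']
      rw [← List.replicate_add]
      simp

theorem isExpansion_replicate {u : α} {m t : ℕ} (hm : 0 < m) (hmt : m ≤ t) :
    IsExpansion (List.replicate m u) (List.replicate t u) := by
  induction m generalizing t with
  | zero => omega
  | succ m ih =>
    rcases Nat.eq_zero_or_pos m with rfl | hm'
    · rw [List.replicate_succ]
      exact isExpansion_cons_iff.mpr ⟨t, [], by omega, isExpansion_nil, by simp⟩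
    · rw [List.replicate_succ]
      refine isExpansion_cons_iff.mpr ⟨1, List.replicate (t - 1) u, one_pos,
        ih hm' (by omega), ?_⟩
      rw [← List.replicate_add]
      congr 1
      omega

theorem isExpansion_trans {x y z : List α} (h1 : IsExpansion x y) (h2 : IsExpansion y z) :
    IsExpansion x z := by
  induction x generalizing y z with
  | nil =>
    rw [isExpansion_nil_iff] at h1; subst h1
    rw [isExpansion_nil_iff] at h2; subst h2
    exact isExpansion_nil
  | cons u t ih =>
    rcases isExpansion_cons_iff.mp h1 with ⟨k, y', hk, h1', rfl⟩
    rcases isExpansion_append_split h2 with ⟨z1, z2, rfl, hz1, hz2⟩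
    rcases isExpansion_replicate_inv hz1 with ⟨hle, hz1'⟩
    exact isExpansion_cons_iff.mpr ⟨z1.length, z2, by omega, ih h1' hz2, by rw [← hz1']⟩

theorem isExpansion_pad_last : ∀ (w : List α) (h : w ≠ []) (j : ℕ),
    IsExpansion w (w ++ List.replicate j (w.getLast h))
  | [], h, _ => absurd rfl h
  | [b], _, j => by
    simpa [List.replicate_succ] using isExpansion_replicate (u := b) (m := 1) (t := j + 1) one_pos (by omega)
  | b :: c :: w', _, j => by
    have := isExpansion_pad_last (c :: w') (by simp) j
    rw [List.getLast_cons (by simp)]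
    refine isExpansion_cons_iff.mpr ⟨1, (c :: w') ++ List.replicate j _, one_pos, this, by simp⟩

theorem corrCost_append {δ : α → α → ℝ} {x1 y1 x2 y2 : List α} (h : x1.length = y1.length) :
    corrCost δ (x1 ++ x2) (y1 ++ y2) = corrCost δ x1 y1 + corrCost δ x2 y2 := by
  unfold corrCost
  rw [List.zipWith_append h, List.sum_append]

theorem zipWith_replicate_left' {δ : α → α → ℝ} {u : α} :
    ∀ w : List α, List.zipWith δ (List.replicate w.length u) w = w.map (δ u)
  | [] => rfl
  | b :: w => by
    rw [List.length_cons, List.replicate_succ, List.zipWith_cons_cons, List.map_cons,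
      zipWith_replicate_left' w]

theorem corrCost_replicate_left {δ : α → α → ℝ} {u : α} {k : ℕ} {w : List α}
    (h : w.length = k) : corrCost δ (List.replicate k u) w = (w.map (δ u)).sum := by
  subst h; exact congrArg List.sum (zipWith_replicate_left' w)

theorem corrCost_nonneg {δ : α → α → ℝ} (hδ : ∀ a b, 0 ≤ δ a b) :
    ∀ xb yb : List α, 0 ≤ corrCost δ xb yb
  | [], _ => le_of_eq rfl
  | _ :: _, [] => le_of_eq (by simp [corrCost])
  | u :: xb, v :: yb => by
    have := corrCost_nonneg hδ xb yb
    unfold corrCost at *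
    rw [List.zipWith_cons_cons, List.sum_cons]
    have := hδ u v
    linarith

/-- Expansion with all duplication counts at most `a`. -/
def IsBddExpansion (a : ℝ) (x xb : List α) : Prop :=
  ∃ ks : List ℕ, ks.length = x.length ∧ (∀ k ∈ ks, 0 < k ∧ (k : ℝ) ≤ a) ∧
    xb = (List.zipWith (fun a k => List.replicate k a) x ks).flatten

theorem isBddExpansion_nil {a : ℝ} : IsBddExpansion a ([] : List α) [] :=
  ⟨[], by simp, by simp, by simp⟩

theorem isBddExpansion_nil_iff {a : ℝ} {xb : List α} :
    IsBddExpansion a ([] : List α) xb ↔ xb = [] := by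
  constructor
  · rintro ⟨ks, hlen, -, rfl⟩
    rw [List.length_nil, List.length_eq_zero_iff] at hlen
    subst hlen; simp
  · rintro rfl; exact isBddExpansion_nil

theorem isBddExpansion_cons_iff {a : ℝ} {u : α} {x xb : List α} :
    IsBddExpansion a (u :: x) xb ↔
      ∃ (k : ℕ) (xb' : List α), 0 < k ∧ (k : ℝ) ≤ a ∧ IsBddExpansion a x xb' ∧
        xb = List.replicate k u ++ xb' := by
  constructor
  · rintro ⟨ks, hlen, hpos, rfl⟩
    cases ks with
    | nil => simp at hlen
    | cons k ks =>
      refine ⟨k, _, (hpos k (by simp)).1, (hpos k (by simp)).2, ⟨ks, by simpa using hlen,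
        fun j hj => hpos j (by simp [hj]), rfl⟩, by simp⟩
  · rintro ⟨k, xb', hk, hka, ⟨ks, hlen, hpos, rfl⟩, rfl⟩
    refine ⟨k :: ks, by simp [hlen], ?_, by simp⟩
    intro j hj
    rcases List.mem_cons.mp hj with rfl | hj
    · exact ⟨hk, hka⟩
    · exact hpos j hj

theorem IsBddExpansion.isExpansion {a : ℝ} {x xb : List α} (h : IsBddExpansion a x xb) :
    IsExpansion x xb := by
  rcases h with ⟨ks, h1, h2, h3⟩
  exact ⟨ks, h1, fun k hk => (h2 k hk).1, h3⟩

theorem isBddExpansion_prepend_replicate {a : ℝ} (ha : 1 ≤ a) {x xb : List α} {u : α}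
    (h : IsBddExpansion a x xb) : ∀ m : ℕ,
    IsBddExpansion a (List.replicate m u ++ x) (List.replicate m u ++ xb)
  | 0 => by simpa using h
  | m + 1 => by
    rw [List.replicate_succ, List.cons_append, List.cons_append]
    have := isBddExpansion_prepend_replicate (u := u) ha h m
    exact isBddExpansion_cons_iff.mpr ⟨1, _, one_pos, by exact_mod_cast ha, this,
      by simp⟩

theorem run_eq_replicate : ∀ (l : List α), l ≠ [] → l.Chain' (· = ·) →
    ∃ u m, 0 < m ∧ l = List.replicate m u
  | [], h, _ => absurd rfl h
  | [b], _, _ => ⟨b, 1, one_pos, rfl⟩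
  | b :: c :: t, _, hch => by
    simp only [List.Chain', List.isChain_cons_cons] at hch
    rcases run_eq_replicate (c :: t) (by simp) hch.2 with ⟨u, m, hm, he⟩
    have hcu : c = u := by
      cases m with
      | zero => omega
      | succ m => rw [List.replicate_succ] at he; exact (List.cons_eq_cons.mp he).1
    refine ⟨u, m + 1, by omega, ?_⟩
    rw [List.replicate_succ, ← he, hch.1, hcu]

theorem reduce_aux [DecidableEq α] {a : ℝ} (ha : 1 ≤ a) :
    ∀ rs : List (List α), (∀ r ∈ rs, ∃ u m, 0 < m ∧ r = List.replicate m u) →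
      IsBddExpansion a
        ((rs.map (fun r => if (r.length : ℝ) < a then r.take 1 else r)).flatten)
        rs.flatten
  | [], _ => by simpa using isBddExpansion_nil
  | r :: rs, hrs => by
    rcases hrs r (by simp) with ⟨u, m, hm, rfl⟩
    have ih := reduce_aux ha rs (fun r hr => hrs r (by simp [hr]))
    rw [List.map_cons, List.flatten_cons, List.flatten_cons]
    by_cases hlt : ((List.replicate m u).length : ℝ) < a
    · rw [if_pos hlt]
      have htake : (List.replicate m u).take 1 = [u] := by
        cases m with
        | zero => omega
        | succ m => rw [List.replicate_succ]; simp
      rw [htake]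
      rw [List.length_replicate] at hlt
      exact isBddExpansion_cons_iff.mpr ⟨m, _, hm, le_of_lt hlt, ih, rfl⟩
    · rw [if_neg hlt]
      exact isBddExpansion_prepend_replicate ha ih m

theorem reduce_isBddExpansion [DecidableEq α] {a : ℝ} (ha : 1 ≤ a) (x : List α) :
    IsBddExpansion a (reduceShortRuns a x) x := by
  have h := reduce_aux ha (x.splitBy (fun c d => decide (c = d))) ?_
  · rw [List.flatten_splitBy] at h
    exact h
  · intro r hr
    refine run_eq_replicate r (List.ne_nil_of_mem_splitBy hr) ?_
    have := List.isChain_of_mem_splitBy hr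
    exact this.imp (fun x y h => of_decide_eq_true h)

theorem key {δ : α → α → ℝ} (hδ : ∀ u v, 0 ≤ δ u v) {a : ℝ} (ha : 1 ≤ a) :
    ∀ x' x xb yb : List α, IsBddExpansion a x' x → IsExpansion x' xb →
      xb.length = yb.length →
      ∃ p q : List α, IsExpansion x p ∧ IsExpansion yb q ∧ p.length = q.length ∧
        corrCost δ p q ≤ a * corrCost δ xb yb
  | [], x, xb, yb, hbdd, hexp, hlen => by
    rw [isBddExpansion_nil_iff] at hbdd; subst hbdd
    rw [isExpansion_nil_iff] at hexp; subst hexp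
    rw [List.length_nil] at hlen
    have : yb = [] := List.length_eq_zero_iff.mp hlen.symm
    subst this
    exact ⟨[], [], isExpansion_nil, isExpansion_nil, rfl, by simp [corrCost]⟩
  | u :: x', x, xb, yb, hbdd, hexp, hlen => by
    rcases isBddExpansion_cons_iff.mp hbdd with ⟨m, xt, hm, hma, hbdd', rfl⟩
    rcases isExpansion_cons_iff.mp hexp with ⟨k, xbt, hk, hexp', rfl⟩
    set w := yb.take k with hw
    set ybt := yb.drop k with hybt
    have hyblen : k + xbt.length = yb.length := by
      simpa using hlen
    have hwlen : w.length = k := by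
      rw [hw, List.length_take]; omega
    have hybtlen : xbt.length = ybt.length := by
      rw [hybt, List.length_drop]; omega
    have hwne : w ≠ [] := by
      intro h
      rw [h] at hwlen
      simp at hwlen
      omega
    rcases key hδ ha x' xt xbt ybt hbdd' hexp' hybtlen with ⟨p2, q2, hp2, hq2, hl2, hc2⟩
    set t := max m k with ht
    set dl := δ u (w.getLast hwne) with hdl
    set D := (w.map (δ u)).sum with hD
    have hD0 : 0 ≤ D := by
      refine List.sum_nonneg ?_
      intro c hc
      rcases List.mem_map.mp hc with ⟨v, -, rfl⟩
      exact hδ u v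
    have hdlD : dl ≤ D := by
      refine List.single_le_sum ?_ _ (List.mem_map.mpr ⟨w.getLast hwne, List.getLast_mem hwne, rfl⟩)
      intro c hc
      rcases List.mem_map.mp hc with ⟨v, -, rfl⟩
      exact hδ u v
    refine ⟨List.replicate t u ++ p2, (w ++ List.replicate (t - k) (w.getLast hwne)) ++ q2,
      ?_, ?_, ?_, ?_⟩
    · exact isExpansion_append (isExpansion_replicate hm (le_max_left m k)) hp2
    · have : yb = w ++ ybt := (List.take_append_drop k yb).symm
      rw [this]
      exact isExpansion_append (isExpansion_pad_last w hwne (t - k)) hq2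
    · simp only [List.length_append, List.length_replicate, hwlen]
      have : k ≤ t := le_max_right m k
      omega
    · have hq1len : (w ++ List.replicate (t - k) (w.getLast hwne)).length = t := by
        simp only [List.length_append, List.length_replicate, hwlen]
        have : k ≤ t := le_max_right m k
        omega
      have e1 : corrCost δ (List.replicate t u ++ p2)
          ((w ++ List.replicate (t - k) (w.getLast hwne)) ++ q2)
          = corrCost δ (List.replicate t u) (w ++ List.replicate (t - k) (w.getLast hwne))
            + corrCost δ p2 q2 :=
        corrCost_append (by rw [hq1len]; simp)
      have e2 : corrCost δ (List.replicate k u ++ xbt) (w ++ ybt)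
          = corrCost δ (List.replicate k u) w + corrCost δ xbt ybt :=
        corrCost_append (by rw [hwlen]; simp)
      have hybeq : yb = w ++ ybt := (List.take_append_drop k yb).symm
      rw [hybeq, e1, e2]
      have hcost1 : corrCost δ (List.replicate t u)
          (w ++ List.replicate (t - k) (w.getLast hwne)) = D + (t - k : ℕ) * dl := by
        rw [corrCost_replicate_left hq1len, List.map_append, List.sum_append, List.map_replicate,
          List.sum_replicate, nsmul_eq_mul]
      have hcostw : corrCost δ (List.replicate k u) w = D := corrCost_replicate_left hwlen
      rw [hcost1, hcostw]
      have htk : ((t - k : ℕ) : ℝ) ≤ a - 1 := by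
        have h1 : t - k ≤ m - 1 := by
          rcases Nat.le_total m k with h | h
          · rw [ht, Nat.max_eq_right h]; omega
          · rw [ht, Nat.max_eq_left h]; omega
        calc ((t - k : ℕ) : ℝ) ≤ ((m - 1 : ℕ) : ℝ) := by exact_mod_cast h1
          _ ≤ (m : ℝ) - 1 := by
              rw [Nat.cast_sub hm]; simp
          _ ≤ a - 1 := by linarith
      have hdl0 : 0 ≤ dl := hδ _ _
      have hmul : ((t - k : ℕ) : ℝ) * dl ≤ (a - 1) * D := by
        refine mul_le_mul htk hdlD hdl0 (by linarith)
      have hcb : 0 ≤ corrCost δ xbt ybt := corrCost_nonneg hδ xbt ybt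
      rw [mul_add]
      have : D + ((t - k : ℕ) : ℝ) * dl ≤ a * D := by nlinarith
      linarith

end DTWAux

/-- dtw(x', y) ≤ dtw(x, y) ≤ α · dtw(x', y) where x' reduces runs of length < α. -/
theorem dtw_reduceShortRuns {α : Type*} [MetricSpace α] [DecidableEq α] (n : ℕ) (a : ℝ)
    (ha : 1 ≤ a) (x y : List α) (hx : x.length ≤ n) (hy : y.length ≤ n) :
    dtw dist (reduceShortRuns a x) y ≤ dtw dist x y ∧
      dtw dist x y ≤ a * dtw dist (reduceShortRuns a x) y := by
  classical
  set x' := reduceShortRuns a x with hx'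
  set S : Set ℝ := {c | ∃ xb yb, IsCorrespondence x y xb yb ∧ c = corrCost dist xb yb} with hS
  set S' : Set ℝ := {c | ∃ xb yb, IsCorrespondence x' y xb yb ∧ c = corrCost dist xb yb} with hS'
  have hδ : ∀ u v : α, 0 ≤ dist u v := fun u v => dist_nonneg
  have hbdd : DTWAux.IsBddExpansion a x' x := DTWAux.reduce_isBddExpansion ha x
  have hexp : IsExpansion x' x := hbdd.isExpansion
  have hdtw : dtw dist x y = sInf S ∧ dtw dist x' y = sInf S' := ⟨rfl, rfl⟩
  have hsub : S ⊆ S' := by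
    rintro c ⟨xb, yb, ⟨hx1, hy1, hl⟩, rfl⟩
    exact ⟨xb, yb, ⟨DTWAux.isExpansion_trans hexp hx1, hy1, hl⟩, rfl⟩
  have hmap : ∀ c ∈ S', ∃ c' ∈ S, c' ≤ a * c := by
    rintro c ⟨xb, yb, ⟨hx1, hy1, hl⟩, rfl⟩
    rcases DTWAux.key hδ ha x' x xb yb hbdd hx1 hl with ⟨p, q, hp, hq, hpq, hc⟩
    exact ⟨corrCost dist p q, ⟨p, q, ⟨hp, DTWAux.isExpansion_trans hy1 hq, hpq⟩, rfl⟩, hc⟩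
  have hlb : ∀ c ∈ S, 0 ≤ c := by
    rintro c ⟨xb, yb, -, rfl⟩
    exact DTWAux.corrCost_nonneg hδ xb yb
  have hlb' : ∀ c ∈ S', 0 ≤ c := by
    rintro c ⟨xb, yb, -, rfl⟩
    exact DTWAux.corrCost_nonneg hδ xb yb
  have hbddS : BddBelow S := ⟨0, hlb⟩
  have hbddS' : BddBelow S' := ⟨0, hlb'⟩
  by_cases hne : S'.Nonempty
  · obtain ⟨c, hc⟩ := hne
    obtain ⟨c', hc', -⟩ := hmap c hc
    have hneS : S.Nonempty := ⟨c', hc'⟩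
    constructor
    · exact csInf_le_csInf hbddS' hneS hsub
    · have ha0 : 0 < a := by linarith
      have hdiv : sInf S / a ≤ sInf S' := by
        refine le_csInf ⟨c, hc⟩ ?_
        intro b hb
        obtain ⟨b', hb', hble⟩ := hmap b hb
        have : sInf S ≤ b' := csInf_le hbddS hb'
        rw [div_le_iff₀ ha0]
        calc sInf S ≤ b' := this
          _ ≤ a * b := hble
          _ = b * a := mul_comm a b
      calc sInf S = (sInf S / a) * a := by field_simp
        _ ≤ sInf S' * a := by
            have := hlb' c hc
            exact mul_le_mul_of_nonneg_right hdiv (le_of_lt ha0)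
        _ = a * sInf S' := mul_comm _ _
  · have hneS : ¬ S.Nonempty := fun ⟨c, hc⟩ => hne ⟨c, hsub hc⟩
    have h1 : S = ∅ := Set.not_nonempty_iff_eq_empty.mp hneS
    have h2 : S' = ∅ := Set.not_nonempty_iff_eq_empty.mp hne
    show sInf S' ≤ sInf S ∧ sInf S ≤ a * sInf S'
    rw [h1, h2, Real.sInf_empty]
    simp
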